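/- arXiv:1611.04072 — 4 statements merged into one kernel-verified Lean document; each statement's English description precedes it below -/
import Mathlib

section
/- Let V be a real finite-dimensional vector space endowed with a non-degenerate indefinite quadratic form 𝕁 (as below), and let F : V × V → ℝ be a symmetric bilinear form such that F(v,v) ≥ 0 for every v ∈ C₀. Then r₊ := inf{ F(v,v)/𝕁(v) : v ∈ V, 𝕁(v) > 0 } ≥ sup{ F(u,u)/𝕁(u) : u ∈ V, 𝕁(u) < 0 } =: r₋, and for every r ∈ [r₋, r₊] one has F(v,v) ≥ r·𝕁(v) for every vector v ∈ V. -/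
open scoped RealInnerProductSpace

/-- **Lemma (Kühne-type).** Let `V = ℝⁿ` (`n ≥ 2`) carry a non-degenerate indefinite
quadratic form `𝕁 v := ⟪J v, v⟫` given by an invertible self-adjoint operator `J`.
If a symmetric bilinear form `F` is non-negative on the zero set `C₀ = {v | 𝕁 v = 0}`,
then `r₋ := sup { F(u,u)/𝕁(u) : 𝕁(u) < 0 } ≤ inf { F(v,v)/𝕁(v) : 𝕁(v) > 0 } =: r₊`
and for every `r ∈ [r₋, r₊]` one has `F(v,v) ≥ r·𝕁(v)` for every vector `v`. -/
theorem stmt_0 {n : ℕ} (hn : 2 ≤ n)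
    (J : EuclideanSpace ℝ (Fin n) →ₗ[ℝ] EuclideanSpace ℝ (Fin n))
    (hJinv : Function.Bijective J)
    (hJsa : ∀ v w : EuclideanSpace ℝ (Fin n), ⟪J v, w⟫ = ⟪v, J w⟫)
    (hindefpos : ∃ v : EuclideanSpace ℝ (Fin n), 0 < ⟪J v, v⟫)
    (hindefneg : ∃ w : EuclideanSpace ℝ (Fin n), ⟪J w, w⟫ < 0)
    (F : EuclideanSpace ℝ (Fin n) →ₗ[ℝ] EuclideanSpace ℝ (Fin n) →ₗ[ℝ] ℝ)
    (hFsymm : ∀ v w, F v w = F w v)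
    (hF0 : ∀ v : EuclideanSpace ℝ (Fin n), ⟪J v, v⟫ = 0 → 0 ≤ F v v) :
    sSup {r : ℝ | ∃ u : EuclideanSpace ℝ (Fin n), ⟪J u, u⟫ < 0 ∧ r = F u u / ⟪J u, u⟫}
      ≤ sInf {r : ℝ | ∃ v : EuclideanSpace ℝ (Fin n), 0 < ⟪J v, v⟫ ∧ r = F v v / ⟪J v, v⟫} ∧
    ∀ r : ℝ,
      sSup {r : ℝ | ∃ u : EuclideanSpace ℝ (Fin n), ⟪J u, u⟫ < 0 ∧ r = F u u / ⟪J u, u⟫} ≤ r →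
      r ≤ sInf {r : ℝ | ∃ v : EuclideanSpace ℝ (Fin n), 0 < ⟪J v, v⟫ ∧ r = F v v / ⟪J v, v⟫} →
      ∀ v : EuclideanSpace ℝ (Fin n), r * ⟪J v, v⟫ ≤ F v v := by
  have expandJ : ∀ (v u : EuclideanSpace ℝ (Fin n)) (x : ℝ),
      ⟪J (v + x • u), v + x • u⟫ = ⟪J v, v⟫ + 2*x*⟪J v, u⟫ + x^2*⟪J u, u⟫ := by
    intro v u x
    have h1 : ⟪J u, v⟫ = ⟪J v, u⟫ := by rw [hJsa]; exact real_inner_comm _ _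
    simp only [map_add, map_smul, inner_add_left, inner_add_right,
      real_inner_smul_left, real_inner_smul_right, h1]
    ring
  have expandF : ∀ (v u : EuclideanSpace ℝ (Fin n)) (x : ℝ),
      F (v + x • u) (v + x • u) = F v v + 2*x*(F v u) + x^2*(F u u) := by
    intro v u x
    simp only [map_add, map_smul, LinearMap.add_apply, LinearMap.smul_apply,
      smul_eq_mul, hFsymm u v]
    ring
  have key : ∀ u v : EuclideanSpace ℝ (Fin n), ⟪J u, u⟫ < 0 → 0 < ⟪J v, v⟫ →
      F u u / ⟪J u, u⟫ ≤ F v v / ⟪J v, v⟫ := by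
    intro u v hu hv
    set a := ⟪J u, u⟫ with ha
    set b := ⟪J v, u⟫ with hb
    set c := ⟪J v, v⟫ with hc
    have hane : a ≠ 0 := ne_of_lt hu
    obtain ⟨s, t, hrootS, hrootT, hst⟩ :
        ∃ s t : ℝ, c + 2*s*b + s^2*a = 0 ∧ c + 2*t*b + t^2*a = 0 ∧ s*t = c/a := by
      have hd0 : 0 ≤ b^2 - a*c := by nlinarith
      have hd2 : Real.sqrt (b^2 - a*c) ^ 2 = b^2 - a*c := Real.sq_sqrt hd0
      refine ⟨(-b + Real.sqrt (b^2 - a*c))/a, (-b - Real.sqrt (b^2 - a*c))/a,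
        ?_, ?_, ?_⟩
      · field_simp
        rw [mul_comm c a]; nlinarith [hd2]
      · field_simp
        rw [mul_comm c a]; nlinarith [hd2]
      · field_simp
        nlinarith [hd2]
    have hstval : s * t < 0 := by rw [hst]; exact div_neg_of_pos_of_neg hv hu
    have hIs : 0 ≤ F v v + 2*s*(F v u) + s^2*(F u u) := by
      rw [← expandF]; apply hF0; rw [expandJ]; linarith [hrootS]
    have hIt : 0 ≤ F v v + 2*t*(F v u) + t^2*(F u u) := by
      rw [← expandF]; apply hF0; rw [expandJ]; linarith [hrootT]
    have main : 0 ≤ F v v - (F u u) * (s*t) := by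
      rcases lt_trichotomy s 0 with hs0 | hs0 | hs0
      · have ht0 : 0 < t := by
          rcases lt_or_ge 0 t with h | h
          · exact h
          · exact absurd (by rw [← neg_mul_neg]; exact mul_nonneg (by linarith) (by linarith) : (0:ℝ) ≤ s*t) (not_le.mpr hstval)
        have hts : 0 < t - s := by linarith
        have h1 : 0 ≤ t * (F v v + 2*s*(F v u) + s^2*(F u u)) := mul_nonneg ht0.le hIs
        have h2 : 0 ≤ (-s) * (F v v + 2*t*(F v u) + t^2*(F u u)) :=
          mul_nonneg (by linarith) hIt
        have h3 : t * (F v v + 2*s*(F v u) + s^2*(F u u))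
            + (-s) * (F v v + 2*t*(F v u) + t^2*(F u u))
            = (t - s) * (F v v - (F u u) * (s*t)) := by ring
        have h4 : (t - s) * 0 ≤ (t - s) * (F v v - (F u u) * (s*t)) := by
          rw [← h3]; linarith
        exact le_of_mul_le_mul_left h4 hts
      · exfalso; rw [hs0, zero_mul] at hstval; exact lt_irrefl _ hstval
      · have ht0 : t < 0 := by
          rcases lt_or_ge t 0 with h | h
          · exact h
          · exact absurd (mul_nonneg hs0.le h) (not_le.mpr hstval)
        have hts : 0 < s - t := by linarith
        have h1 : 0 ≤ s * (F v v + 2*t*(F v u) + t^2*(F u u)) := mul_nonneg hs0.le hIt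
        have h2 : 0 ≤ (-t) * (F v v + 2*s*(F v u) + s^2*(F u u)) :=
          mul_nonneg (by linarith) hIs
        have h3 : s * (F v v + 2*t*(F v u) + t^2*(F u u))
            + (-t) * (F v v + 2*s*(F v u) + s^2*(F u u))
            = (s - t) * (F v v - (F u u) * (s*t)) := by ring
        have h4 : (s - t) * 0 ≤ (s - t) * (F v v - (F u u) * (s*t)) := by
          rw [← h3]; linarith
        exact le_of_mul_le_mul_left h4 hts
    rw [hst] at main
    have h6 : (-a) * (F v v - F u u * (c/a)) = F u u * c - F v v * a := by
      field_simp; ring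
    have h5 : 0 ≤ (-a) * (F v v - F u u * (c/a)) := mul_nonneg (by linarith) main
    have hfin : F v v * a ≤ F u u * c := by rw [h6] at h5; linarith
    rw [show F u u / a = (-(F u u))/(-a) from (neg_div_neg_eq _ _).symm,
      div_le_div_iff₀ (by linarith) hv]
    linarith
  obtain ⟨v₀, hv₀⟩ := hindefpos
  obtain ⟨u₀, hu₀⟩ := hindefneg
  have hAne : {r : ℝ | ∃ u, ⟪J u, u⟫ < 0 ∧ r = F u u / ⟪J u, u⟫}.Nonempty :=
    ⟨_, u₀, hu₀, rfl⟩
  have hBne : {r : ℝ | ∃ v, 0 < ⟪J v, v⟫ ∧ r = F v v / ⟪J v, v⟫}.Nonempty :=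
    ⟨_, v₀, hv₀, rfl⟩
  have hbddA : BddAbove {r : ℝ | ∃ u, ⟪J u, u⟫ < 0 ∧ r = F u u / ⟪J u, u⟫} :=
    ⟨F v₀ v₀ / ⟪J v₀, v₀⟫, fun r ⟨u, hu, hr⟩ => hr ▸ key u v₀ hu hv₀⟩
  have hbddB : BddBelow {r : ℝ | ∃ v, 0 < ⟪J v, v⟫ ∧ r = F v v / ⟪J v, v⟫} :=
    ⟨F u₀ u₀ / ⟪J u₀, u₀⟫, fun r ⟨v, hv, hr⟩ => hr ▸ key u₀ v hu₀ hv⟩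
  refine ⟨csSup_le hAne fun r ⟨u, hu, hr⟩ => hr ▸ le_csInf hBne
    fun r' ⟨v, hv, hr'⟩ => hr' ▸ key u v hu hv, ?_⟩
  intro r hr1 hr2 v
  rcases lt_trichotomy (⟪J v, v⟫ : ℝ) 0 with hv | hv | hv
  · have hmem : F v v / ⟪J v, v⟫ ∈ {r : ℝ | ∃ u, ⟪J u, u⟫ < 0 ∧ r = F u u / ⟪J u, u⟫} :=
      ⟨v, hv, rfl⟩
    have := (le_csSup hbddA hmem).trans hr1
    exact (div_le_iff_of_neg hv).mp this
  · rw [hv, mul_zero]; exact hF0 v hv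
  · have hmem : F v v / ⟪J v, v⟫ ∈ {r : ℝ | ∃ w, 0 < ⟪J w, w⟫ ∧ r = F w w / ⟪J w, w⟫} :=
      ⟨v, hv, rfl⟩
    have := hr2.trans (csInf_le hbddB hmem)
    exact (le_div_iff₀ hv).mp this
end

section
/- Let V be a real finite-dimensional vector space endowed with a non-degenerate indefinite quadratic form 𝕁 (as below), and let F : V × V → ℝ be a symmetric bilinear form such that F(v,v) > 0 for every v ∈ C₀ \ {0}. Then r₋ := sup{ F(u,u)/𝕁(u) : 𝕁(u) < 0 } < inf{ F(v,v)/𝕁(v) : 𝕁(v) > 0 } =: r₊, and for every r ∈ (r₋, r₊) one has F(v,v) > r·𝕁(v) for every nonzero vector v ∈ V. -/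
open scoped RealInnerProductSpace

set_option maxHeartbeats 1000000 in
theorem kuhne_aux {n : ℕ}
    (J : EuclideanSpace ℝ (Fin n) →ₗ[ℝ] EuclideanSpace ℝ (Fin n))
    (hJsa : ∀ v w : EuclideanSpace ℝ (Fin n), ⟪J v, w⟫ = ⟪v, J w⟫)
    (F : EuclideanSpace ℝ (Fin n) →ₗ[ℝ] EuclideanSpace ℝ (Fin n) →ₗ[ℝ] ℝ)
    (hFsymm : ∀ v w, F v w = F w v)
    (hF0 : ∀ v : EuclideanSpace ℝ (Fin n), v ≠ 0 → ⟪J v, v⟫ = 0 → 0 < F v v)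
    (hneg : ∃ u : EuclideanSpace ℝ (Fin n), ⟪J u, u⟫ < 0) :
    ∃ v : EuclideanSpace ℝ (Fin n), ⟪J v, v⟫ < 0 ∧
      (∀ u, ⟪J u, u⟫ < 0 → F u u / ⟪J u, u⟫ ≤ F v v / ⟪J v, v⟫) ∧
      (∀ h, F v h = (F v v / ⟪J v, v⟫) * ⟪J v, h⟫) := by
  set E := EuclideanSpace ℝ (Fin n) with hEdef
  obtain ⟨g, hgdef⟩ : ∃ g : E → ℝ, g = fun x => ⟪J x, x⟫ := ⟨_, rfl⟩
  obtain ⟨f, hfdef⟩ : ∃ f : E → ℝ, f = fun x => F x x := ⟨_, rfl⟩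
  have hJc : ∀ x y : E, ⟪J y, x⟫ = ⟪J x, y⟫ := fun x y => by
    rw [hJsa y x, real_inner_comm]
  have hgexp : ∀ (x y : E) (s t : ℝ),
      g (s • x + t • y) = s^2 * g x + 2*s*t*⟪J x, y⟫ + t^2 * g y := by
    intro x y s t
    simp only [hgdef, map_add, map_smul, inner_add_left, inner_add_right,
      real_inner_smul_left, real_inner_smul_right]
    rw [hJc x y]; ring
  have hfexp : ∀ (x y : E) (s t : ℝ),
      f (s • x + t • y) = s^2 * f x + 2*s*t*(F x y) + t^2 * f y := by
    intro x y s t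
    simp only [hfdef, map_add, map_smul, LinearMap.add_apply, LinearMap.smul_apply, smul_eq_mul]
    rw [hFsymm y x]; ring
  have hgscale : ∀ (c : ℝ) (x : E), g (c • x) = c^2 * g x := by
    intro c x
    have h1 := hgexp x 0 c 0
    simpa using h1
  have hfscale : ∀ (c : ℝ) (x : E), f (c • x) = c^2 * f x := by
    intro c x
    have h1 := hfexp x 0 c 0
    simpa using h1
  have hgc : Continuous g := by
    rw [hgdef]
    exact (J.continuous_of_finiteDimensional).inner continuous_id
  have hfc : Continuous f := by
    rw [hfdef]
    have hA : Continuous fun x => (LinearMap.toContinuousLinearMap (F x) : E →L[ℝ] ℝ) :=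
      ((LinearMap.toContinuousLinearMap.toLinearMap.comp F).continuous_of_finiteDimensional)
    exact isBoundedBilinearMap_apply.continuous.comp (hA.prodMk continuous_id)
  have hF0' : ∀ x : E, x ≠ 0 → g x = 0 → 0 < f x := by
    intro x hx h0
    rw [hgdef] at h0
    rw [hfdef]
    exact hF0 x hx h0
  set S : Set E := Metric.sphere (0 : E) 1 with hSdef
  have hS : IsCompact S := isCompact_sphere 0 1
  have hSne0 : ∀ x ∈ S, x ≠ 0 := by
    intro x hx h0
    rw [hSdef, mem_sphere_zero_iff_norm] at hx
    simp [h0] at hx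
  -- Step 1: near the null cone on the sphere, f is positive
  have hstep1 : ∃ ε > (0:ℝ), ∀ x ∈ S, |g x| < ε → 0 < f x := by
    set K : Set E := S ∩ f ⁻¹' Set.Iic 0 with hKdef
    have hKc : IsCompact K := hS.inter_right (isClosed_Iic.preimage hfc)
    rcases K.eq_empty_or_nonempty with hK | hK
    · refine ⟨1, one_pos, fun x hx _ => ?_⟩
      by_contra hfx
      push_neg at hfx
      have : x ∈ K := ⟨hx, hfx⟩
      rw [hK] at this
      exact this
    · obtain ⟨x₀, hx₀K, hx₀min⟩ := hKc.exists_isMinOn hK ((continuous_abs.comp hgc).continuousOn)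
      have hgx₀ : g x₀ ≠ 0 := by
        intro h0
        have h1 := hF0' x₀ (hSne0 x₀ hx₀K.1) h0
        have h2 : f x₀ ≤ 0 := hx₀K.2
        exact absurd h1 (not_lt.2 h2)
      refine ⟨|g x₀|, abs_pos.2 hgx₀, fun x hx hgx => ?_⟩
      by_contra hfx
      push_neg at hfx
      have hxK : x ∈ K := ⟨hx, hfx⟩
      have h2 : |g x₀| ≤ |g x| := hx₀min hxK
      linarith
  obtain ⟨ε, hε, hεf⟩ := hstep1
  -- Step 2: uniform positive lower bound on the strip
  have hstep2 : ∃ c > (0:ℝ), ∀ x ∈ S, |g x| ≤ ε/2 → c ≤ f x := by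
    set K₂ : Set E := S ∩ (fun x => |g x|) ⁻¹' Set.Iic (ε/2) with hK₂def
    have hK₂c : IsCompact K₂ := hS.inter_right (isClosed_Iic.preimage (continuous_abs.comp hgc))
    rcases K₂.eq_empty_or_nonempty with hK | hK
    · refine ⟨1, one_pos, fun x hx hgx => ?_⟩
      exfalso
      have : x ∈ K₂ := ⟨hx, hgx⟩
      rw [hK] at this
      exact this
    · obtain ⟨y₀, hy₀K, hy₀min⟩ := hK₂c.exists_isMinOn hK hfc.continuousOn
      have hy₀pos : 0 < f y₀ := by
        refine hεf y₀ hy₀K.1 ?_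
        have h2 : |g y₀| ≤ ε/2 := hy₀K.2
        linarith
      exact ⟨f y₀, hy₀pos, fun x hx hgx => hy₀min ⟨hx, hgx⟩⟩
  obtain ⟨c, hc, hcf⟩ := hstep2
  -- normalization
  have hnorm : ∀ u : E, u ≠ 0 → ∃ x ∈ S, g x = (‖u‖⁻¹)^2 * g u ∧ f x / g x = f u / g u := by
    intro u hu
    have hnu : ‖u‖ ≠ 0 := norm_ne_zero_iff.2 hu
    refine ⟨‖u‖⁻¹ • u, ?_, hgscale _ _, ?_⟩
    · rw [hSdef, mem_sphere_zero_iff_norm, norm_smul]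
      simp [abs_of_nonneg (norm_nonneg u), inv_mul_cancel₀ hnu]
    · rw [hgscale, hfscale]
      exact mul_div_mul_left _ _ (pow_ne_zero 2 (inv_ne_zero hnu))
  obtain ⟨u₀, hu₀'⟩ := hneg
  have hu₀0 : u₀ ≠ 0 := by
    rintro rfl
    simp at hu₀'
  have hu₀ : g u₀ < 0 := by rw [hgdef]; exact hu₀'
  obtain ⟨x₀, hx₀S, hx₀g, hx₀r⟩ := hnorm u₀ hu₀0
  have hgx₀ : g x₀ < 0 := by
    rw [hx₀g]
    have h1 : (0:ℝ) < (‖u₀‖⁻¹)^2 := pow_pos (inv_pos.2 (norm_pos_iff.2 hu₀0)) 2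
    exact mul_neg_of_pos_of_neg h1 hu₀
  obtain ⟨a₀, ha₀def⟩ : ∃ a : ℝ, a = f x₀ / g x₀ := ⟨_, rfl⟩
  obtain ⟨δ, hδdef⟩ : ∃ d : ℝ, d = min (ε/2) (min (c/(|a₀|+1)) (-(g x₀))) := ⟨_, rfl⟩
  have hδpos : 0 < δ := by
    rw [hδdef]
    exact lt_min (by linarith) (lt_min (div_pos hc (by positivity)) (by linarith))
  have hδε : δ ≤ ε/2 := by rw [hδdef]; exact min_le_left _ _
  have hδc : δ * (|a₀|+1) ≤ c := by
    have h1 : δ ≤ c/(|a₀|+1) := by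
      rw [hδdef]; exact le_trans (min_le_right _ _) (min_le_left _ _)
    have h2 : (0:ℝ) < |a₀|+1 := by positivity
    calc δ * (|a₀|+1) ≤ (c/(|a₀|+1)) * (|a₀|+1) :=
          mul_le_mul_of_nonneg_right h1 (le_of_lt h2)
      _ = c := div_mul_cancel₀ c (ne_of_gt h2)
  have hδx₀ : δ ≤ -(g x₀) := by
    rw [hδdef]; exact le_trans (min_le_right _ _) (min_le_right _ _)
  -- strip bound
  have hstrip : ∀ x ∈ S, -δ < g x → g x < 0 → f x / g x ≤ a₀ := by
    intro x hx h1 h2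
    have hfx : c ≤ f x := by
      refine hcf x hx ?_
      rw [abs_le]
      constructor <;> linarith
    rw [div_le_iff_of_neg h2]
    nlinarith [neg_abs_le a₀, abs_nonneg a₀,
      mul_nonneg (by linarith [neg_abs_le a₀] : (0:ℝ) ≤ |a₀| + a₀) (by linarith : (0:ℝ) ≤ -g x),
      mul_nonneg (abs_nonneg a₀) (by linarith : (0:ℝ) ≤ δ + g x)]
  -- compact region and maximizer
  set K' : Set E := S ∩ g ⁻¹' Set.Iic (-δ) with hK'def
  have hK'c : IsCompact K' := hS.inter_right (isClosed_Iic.preimage hgc)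
  have hx₀K' : x₀ ∈ K' := ⟨hx₀S, by
    have h1 : g x₀ ≤ -δ := by linarith
    exact h1⟩
  have hφc : ContinuousOn (fun x => f x / g x) K' := by
    refine hfc.continuousOn.div hgc.continuousOn (fun x hx => ?_)
    have h1 : g x ≤ -δ := hx.2
    exact ne_of_lt (by linarith)
  obtain ⟨v, hvK, hvmax⟩ := hK'c.exists_isMaxOn ⟨x₀, hx₀K'⟩ hφc
  have hgv : g v < 0 := by
    have h1 : g v ≤ -δ := hvK.2
    linarith
  obtain ⟨M, hMdef⟩ : ∃ m : ℝ, m = f v / g v := ⟨_, rfl⟩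
  have hvmax' : ∀ y ∈ K', f y / g y ≤ M := by
    intro y hy
    rw [hMdef]
    exact hvmax hy
  have ha₀M : a₀ ≤ M := by
    rw [ha₀def]
    exact hvmax' x₀ hx₀K'
  -- upper bound over the whole negative cone
  have hub : ∀ u, g u < 0 → f u / g u ≤ M := by
    intro u hu
    have hu0 : u ≠ 0 := by
      rintro rfl
      rw [hgdef] at hu
      simp at hu
    obtain ⟨x, hxS, hxg, hxr⟩ := hnorm u hu0
    have hgx : g x < 0 := by
      rw [hxg]
      have h1 : (0:ℝ) < (‖u‖⁻¹)^2 := pow_pos (inv_pos.2 (norm_pos_iff.2 hu0)) 2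
      exact mul_neg_of_pos_of_neg h1 hu
    rw [← hxr]
    by_cases hxδ : g x ≤ -δ
    · exact hvmax' x ⟨hxS, hxδ⟩
    · push_neg at hxδ
      exact le_trans (hstrip x hxS hxδ hgx) ha₀M
  have hfv : f v = M * g v := by
    rw [hMdef, div_mul_cancel₀ _ (ne_of_lt hgv)]
  -- first-order condition
  have hfo : ∀ h : E, F v h = M * ⟪J v, h⟫ := by
    intro h
    obtain ⟨p, hpdef⟩ : ∃ p : ℝ, p = ⟪J v, h⟫ := ⟨_, rfl⟩
    obtain ⟨Q, hQdef⟩ : ∃ q : ℝ, q = F v h - M * p := ⟨_, rfl⟩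
    obtain ⟨qh, hqhdef⟩ : ∃ q : ℝ, q = f h - M * g h := ⟨_, rfl⟩
    obtain ⟨B₁, hB₁def⟩ : ∃ b : ℝ, b = 2*|p| + |g h| + 1 := ⟨_, rfl⟩
    have hB₁ : 0 < B₁ := by rw [hB₁def]; positivity
    obtain ⟨δt, hδtdef⟩ : ∃ d : ℝ, d = min 1 ((-(g v))/(2*B₁)) := ⟨_, rfl⟩
    have hδt : 0 < δt := by
      rw [hδtdef]
      exact lt_min one_pos (div_pos (by linarith) (by linarith))
    have hδt1 : δt ≤ 1 := by rw [hδtdef]; exact min_le_left _ _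
    have hδt2 : δt ≤ (-(g v))/(2*B₁) := by rw [hδtdef]; exact min_le_right _ _
    have key : ∀ t : ℝ, |t| ≤ δt → 0 ≤ 2*t*Q + t^2*qh := by
      intro t ht
      have ht1 : |t| ≤ 1 := le_trans ht hδt1
      have ht2 : |t| * B₁ ≤ (-(g v))/2 := by
        have h1 : |t| ≤ (-(g v))/(2*B₁) := le_trans ht hδt2
        have hB₁ne : B₁ ≠ 0 := ne_of_gt hB₁
        have h2 : ((-(g v))/(2*B₁)) * B₁ = (-(g v))/2 := by
          field_simp
        calc |t| * B₁ ≤ ((-(g v))/(2*B₁)) * B₁ :=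
              mul_le_mul_of_nonneg_right h1 (le_of_lt hB₁)
          _ = (-(g v))/2 := h2
      have hp1 : t * p ≤ |t| * |p| := by
        have h1 := le_abs_self (t * p)
        rwa [abs_mul] at h1
      have hp2 : t^2 * g h ≤ t^2 * |g h| := mul_le_mul_of_nonneg_left (le_abs_self _) (sq_nonneg t)
      have hp3 : t^2 ≤ |t| := by
        have h1 : t^2 = |t|^2 := (sq_abs t).symm
        nlinarith [abs_nonneg t]
      have hp4 : t^2 * |g h| ≤ |t| * |g h| := mul_le_mul_of_nonneg_right hp3 (abs_nonneg _)
      have hBle : 2*|p| + |g h| ≤ B₁ := by rw [hB₁def]; linarith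
      have hsum : 2*t*p + t^2*(g h) ≤ |t| * B₁ := by
        nlinarith [mul_le_mul_of_nonneg_left hBle (abs_nonneg t)]
      have hgu : g (v + t • h) < 0 := by
        have hexp : g (v + t • h) = g v + 2*t*p + t^2 * g h := by
          rw [hpdef]
          have h1 := hgexp v h 1 t
          simpa using h1
        rw [hexp]
        linarith
      have hle := hub (v + t • h) hgu
      rw [div_le_iff_of_neg hgu] at hle
      have hexpg : g (v + t • h) = g v + 2*t*p + t^2 * g h := by
        rw [hpdef]
        have h1 := hgexp v h 1 t; simpa using h1
      have hexpf : f (v + t • h) = f v + 2*t*(F v h) + t^2 * f h := by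
        have h1 := hfexp v h 1 t; simpa using h1
      rw [hexpg, hexpf, hfv] at hle
      rw [hQdef, hqhdef]
      nlinarith [hle]
    have hQ0 : Q = 0 := by
      by_contra hQ
      obtain ⟨t₀, ht₀def⟩ : ∃ t : ℝ, t = min δt (|Q|/(|qh|+1)) := ⟨_, rfl⟩
      have ht₀pos : 0 < t₀ := by
        rw [ht₀def]
        exact lt_min hδt (div_pos (abs_pos.2 hQ) (by positivity))
      have ht₀δt : t₀ ≤ δt := by rw [ht₀def]; exact min_le_left _ _
      have ht₀Q : t₀ * (|qh|+1) ≤ |Q| := by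
        have h1 : t₀ ≤ |Q|/(|qh|+1) := by rw [ht₀def]; exact min_le_right _ _
        calc t₀ * (|qh|+1) ≤ (|Q|/(|qh|+1)) * (|qh|+1) :=
              mul_le_mul_of_nonneg_right h1 (by positivity)
          _ = |Q| := div_mul_cancel₀ _ (by positivity)
      rcases lt_or_gt_of_ne hQ with hQneg | hQpos
      · have hk := key t₀ (by rw [abs_of_pos ht₀pos]; exact ht₀δt)
        rw [abs_of_neg hQneg] at ht₀Q
        nlinarith [hk, mul_le_mul_of_nonneg_left ht₀Q ht₀pos.le,
          mul_nonneg (sq_nonneg t₀) (sub_nonneg.2 (le_abs_self qh)),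
          mul_pos ht₀pos (neg_pos.2 hQneg)]
      · have hk := key (-t₀) (by rw [abs_neg, abs_of_pos ht₀pos]; exact ht₀δt)
        rw [abs_of_pos hQpos] at ht₀Q
        nlinarith [hk, mul_le_mul_of_nonneg_left ht₀Q ht₀pos.le,
          mul_nonneg (sq_nonneg t₀) (sub_nonneg.2 (le_abs_self qh)),
          mul_pos ht₀pos hQpos]
    rw [hQdef] at hQ0
    rw [← hpdef]
    linarith
  refine ⟨v, ?_, ?_, ?_⟩
  · have h1 := hgv
    rw [hgdef] at h1
    exact h1
  · intro u hu
    have hu' : g u < 0 := by rw [hgdef]; exact hu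
    have h1 := hub u hu'
    rw [hMdef, hgdef, hfdef] at h1
    exact h1
  · intro h
    have h1 := hfo h
    rw [hMdef, hgdef, hfdef] at h1
    exact h1

set_option maxHeartbeats 1000000 in
/-- **Lemma (Kühne-type, strict version).** Let `V = ℝⁿ` (`n ≥ 2`) carry a non-degenerate
indefinite quadratic form `𝕁 v := ⟪J v, v⟫` given by an invertible self-adjoint operator `J`.
If a symmetric bilinear form `F` is positive on `C₀ \ {0}`, then
`r₋ := sup { F(u,u)/𝕁(u) : 𝕁(u) < 0 } < inf { F(v,v)/𝕁(v) : 𝕁(v) > 0 } =: r₊`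
and for every `r ∈ (r₋, r₊)` one has `F(v,v) > r·𝕁(v)` for every nonzero vector `v`. -/
theorem stmt_1 {n : ℕ} (hn : 2 ≤ n)
    (J : EuclideanSpace ℝ (Fin n) →ₗ[ℝ] EuclideanSpace ℝ (Fin n))
    (hJinv : Function.Bijective J)
    (hJsa : ∀ v w : EuclideanSpace ℝ (Fin n), ⟪J v, w⟫ = ⟪v, J w⟫)
    (hindefpos : ∃ v : EuclideanSpace ℝ (Fin n), 0 < ⟪J v, v⟫)
    (hindefneg : ∃ w : EuclideanSpace ℝ (Fin n), ⟪J w, w⟫ < 0)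
    (F : EuclideanSpace ℝ (Fin n) →ₗ[ℝ] EuclideanSpace ℝ (Fin n) →ₗ[ℝ] ℝ)
    (hFsymm : ∀ v w, F v w = F w v)
    (hF0 : ∀ v : EuclideanSpace ℝ (Fin n), v ≠ 0 → ⟪J v, v⟫ = 0 → 0 < F v v) :
    sSup {r : ℝ | ∃ u : EuclideanSpace ℝ (Fin n), ⟪J u, u⟫ < 0 ∧ r = F u u / ⟪J u, u⟫}
      < sInf {r : ℝ | ∃ v : EuclideanSpace ℝ (Fin n), 0 < ⟪J v, v⟫ ∧ r = F v v / ⟪J v, v⟫} ∧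
    ∀ r : ℝ,
      sSup {r : ℝ | ∃ u : EuclideanSpace ℝ (Fin n), ⟪J u, u⟫ < 0 ∧ r = F u u / ⟪J u, u⟫} < r →
      r < sInf {r : ℝ | ∃ v : EuclideanSpace ℝ (Fin n), 0 < ⟪J v, v⟫ ∧ r = F v v / ⟪J v, v⟫} →
      ∀ v : EuclideanSpace ℝ (Fin n), v ≠ 0 → r * ⟪J v, v⟫ < F v v := by
  -- negative side: maximizer
  obtain ⟨v, hgv, hubA, hvfo⟩ := kuhne_aux J hJsa F hFsymm hF0 hindefneg
  -- positive side: apply the aux lemma to -J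
  have hneg_apply : ∀ x y : EuclideanSpace ℝ (Fin n), ⟪(-J) x, y⟫ = -⟪J x, y⟫ := by
    intro x y
    simp [LinearMap.neg_apply, inner_neg_left]
  have hJsa' : ∀ a b : EuclideanSpace ℝ (Fin n), ⟪(-J) a, b⟫ = ⟪a, (-J) b⟫ := by
    intro a b
    simp only [LinearMap.neg_apply, inner_neg_left, inner_neg_right, hJsa]
  have hF0' : ∀ x : EuclideanSpace ℝ (Fin n), x ≠ 0 → ⟪(-J) x, x⟫ = 0 → 0 < F x x := by
    intro x hx h0
    rw [hneg_apply] at h0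
    exact hF0 x hx (by linarith)
  have hneg' : ∃ u : EuclideanSpace ℝ (Fin n), ⟪(-J) u, u⟫ < 0 := by
    obtain ⟨u, hu⟩ := hindefpos
    exact ⟨u, by rw [hneg_apply]; linarith⟩
  obtain ⟨w, hgw', hubB', hwfo'⟩ := kuhne_aux (-J) hJsa' F hFsymm hF0' hneg'
  have hgw : 0 < ⟪J w, w⟫ := by rw [hneg_apply] at hgw'; linarith
  -- translate the positive-side conclusions
  obtain ⟨M, hMdef⟩ : ∃ x : ℝ, x = F v v / ⟪J v, v⟫ := ⟨_, rfl⟩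
  obtain ⟨m, hmdef⟩ : ∃ x : ℝ, x = F w w / ⟪J w, w⟫ := ⟨_, rfl⟩
  have hubA' : ∀ u, ⟪J u, u⟫ < 0 → F u u / ⟪J u, u⟫ ≤ M := by
    intro u hu; rw [hMdef]; exact hubA u hu
  have hvfoM : ∀ h, F v h = M * ⟪J v, h⟫ := by
    intro h; rw [hMdef]; exact hvfo h
  have hlbB : ∀ u, 0 < ⟪J u, u⟫ → m ≤ F u u / ⟪J u, u⟫ := by
    intro u hu
    have h1 := hubB' u (by rw [hneg_apply]; linarith)
    rw [hneg_apply, hneg_apply, div_neg, div_neg] at h1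
    rw [hmdef]
    linarith
  have hwfoM : ∀ h, F w h = m * ⟪J w, h⟫ := by
    intro h
    have h1 := hwfo' h
    rw [hneg_apply, hneg_apply, div_neg, neg_mul_neg] at h1
    rw [hmdef]
    exact h1
  -- expansions
  have hJc : ∀ x y : EuclideanSpace ℝ (Fin n), ⟪J y, x⟫ = ⟪J x, y⟫ := fun x y => by
    rw [hJsa y x, real_inner_comm]
  have hgexp : ∀ (x y : EuclideanSpace ℝ (Fin n)) (s t : ℝ),
      ⟪J (s • x + t • y), s • x + t • y⟫ =
        s^2 * ⟪J x, x⟫ + 2*s*t*⟪J x, y⟫ + t^2 * ⟪J y, y⟫ := by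
    intro x y s t
    simp only [map_add, map_smul, inner_add_left, inner_add_right,
      real_inner_smul_left, real_inner_smul_right]
    rw [hJc x y]; ring
  have hfexp : ∀ (x y : EuclideanSpace ℝ (Fin n)) (s t : ℝ),
      F (s • x + t • y) (s • x + t • y) = s^2 * F x x + 2*s*t*(F x y) + t^2 * F y y := by
    intro x y s t
    simp only [map_add, map_smul, LinearMap.add_apply, LinearMap.smul_apply, smul_eq_mul]
    rw [hFsymm y x]; ring
  -- the strict gap
  have hlt : M < m := by
    by_contra hcon
    push_neg at hcon
    obtain ⟨D, hDdef⟩ : ∃ x : ℝ, x = Real.sqrt (⟪J v, w⟫^2 - ⟪J v, v⟫*⟪J w, w⟫) := ⟨_, rfl⟩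
    have hD2 : D^2 = ⟪J v, w⟫^2 - ⟪J v, v⟫*⟪J w, w⟫ := by
      rw [hDdef]
      exact Real.sq_sqrt (by nlinarith [sq_nonneg (⟪J v, w⟫ : ℝ), mul_pos_of_neg_of_neg hgv hgv])
    obtain ⟨α, hαdef⟩ : ∃ x : ℝ, x = -⟪J v, w⟫ - D := ⟨_, rfl⟩
    have hz_g : ⟪J (α • v + ⟪J v, v⟫ • w), α • v + ⟪J v, v⟫ • w⟫ =
        α^2 * ⟪J v, v⟫ + 2*α*⟪J v, v⟫*⟪J v, w⟫ + ⟪J v, v⟫^2 * ⟪J w, w⟫ := hgexp v w α _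
    have hznull : ⟪J (α • v + ⟪J v, v⟫ • w), α • v + ⟪J v, v⟫ • w⟫ = 0 := by
      rw [hz_g, hαdef]
      linear_combination ⟪J v, v⟫ * hD2
    have hzne : α • v + ⟪J v, v⟫ • w ≠ 0 := by
      intro hz0
      have h1 : α • v = (-⟪J v, v⟫) • w := by
        rw [neg_smul]
        exact eq_neg_of_add_eq_zero_left hz0
      have h2 : ⟪J (α • v), α • v⟫ = ⟪J ((-⟪J v, v⟫) • w), (-⟪J v, v⟫) • w⟫ := by rw [h1]
      simp only [map_smul, real_inner_smul_left, real_inner_smul_right] at h2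
      nlinarith [sq_nonneg α, mul_pos_of_neg_of_neg hgv hgv, hgw, hgv]
    have hz_f : F (α • v + ⟪J v, v⟫ • w) (α • v + ⟪J v, v⟫ • w) =
        α^2 * F v v + 2*α*⟪J v, v⟫*(F v w) + ⟪J v, v⟫^2 * F w w := hfexp v w α _
    have hpos := hF0 _ hzne hznull
    have hFvv : F v v = M * ⟪J v, v⟫ := hvfoM v
    have hFvw : F v w = M * ⟪J v, w⟫ := hvfoM w
    have hFww : F w w = m * ⟪J w, w⟫ := hwfoM w
    have hcomp : F (α • v + ⟪J v, v⟫ • w) (α • v + ⟪J v, v⟫ • w) =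
        ⟪J v, v⟫^2 * ⟪J w, w⟫ * (m - M) := by
      rw [hz_f, hFvv, hFvw, hFww, hαdef]
      linear_combination (M * ⟪J v, v⟫) * hD2
    rw [hcomp] at hpos
    nlinarith [mul_pos (mul_pos_of_neg_of_neg hgv hgv) hgw]
  -- identify the sup and inf
  have hAg : IsGreatest
      {r : ℝ | ∃ u : EuclideanSpace ℝ (Fin n), ⟪J u, u⟫ < 0 ∧ r = F u u / ⟪J u, u⟫} M := by
    constructor
    · exact ⟨v, hgv, hMdef⟩
    · rintro r ⟨u, hu, rfl⟩
      exact hubA' u hu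
  have hBl : IsLeast
      {r : ℝ | ∃ v : EuclideanSpace ℝ (Fin n), 0 < ⟪J v, v⟫ ∧ r = F v v / ⟪J v, v⟫} m := by
    constructor
    · exact ⟨w, hgw, hmdef⟩
    · rintro r ⟨u, hu, rfl⟩
      exact hlbB u hu
  rw [hAg.csSup_eq, hBl.csInf_eq]
  refine ⟨hlt, ?_⟩
  intro r hr1 hr2 x hx
  rcases lt_trichotomy (⟪J x, x⟫ : ℝ) 0 with hxneg | hx0 | hxpos
  · have h2 : F x x / ⟪J x, x⟫ < r := lt_of_le_of_lt (hubA' x hxneg) hr1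
    rwa [div_lt_iff_of_neg hxneg] at h2
  · rw [hx0, mul_zero]
    exact hF0 x hx hx0
  · have h2 : r < F x x / ⟪J x, x⟫ := lt_of_lt_of_le hr2 (hlbB x hxpos)
    rwa [lt_div_iff₀ hxpos] at h2
end

section
/- Let J̃ : V → V be a self-adjoint linear operator. If ⟨J̃v, v⟩ ≥ 0 for every v with 𝕁(v) = 0, then there exists a ∈ ℝ such that ⟨J̃v, v⟩ ≥ a·𝕁(v) for all v ∈ V. If moreover ⟨J̃v, v⟩ > 0 for every nonzero v with 𝕁(v) = 0, then there exists a ∈ ℝ such that ⟨J̃v, v⟩ > a·𝕁(v) for all nonzero v ∈ V. -/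
open scoped RealInnerProductSpace

section Aux

variable {n : ℕ}

private lemma expand_quad_aux (L : EuclideanSpace ℝ (Fin n) →ₗ[ℝ] EuclideanSpace ℝ (Fin n))
    (hL : ∀ v w : EuclideanSpace ℝ (Fin n), ⟪L v, w⟫ = ⟪v, L w⟫)
    (v w : EuclideanSpace ℝ (Fin n)) (t : ℝ) :
    ⟪L (v + t • w), v + t • w⟫ = ⟪L v, v⟫ + 2*t*⟪L v, w⟫ + t^2 * ⟪L w, w⟫ := by
  have h1 : ⟪L w, v⟫ = ⟪L v, w⟫ := by rw [hL w v, real_inner_comm]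
  simp only [map_add, map_smul, inner_add_left, inner_add_right, real_inner_smul_left,
    real_inner_smul_right, h1]
  ring

private lemma smul_quad_aux (L : EuclideanSpace ℝ (Fin n) →ₗ[ℝ] EuclideanSpace ℝ (Fin n))
    (c : ℝ) (v : EuclideanSpace ℝ (Fin n)) :
    ⟪L (c • v), c • v⟫ = c^2 * ⟪L v, v⟫ := by
  simp only [map_smul, real_inner_smul_left, real_inner_smul_right]
  ring

private lemma alg_roots_aux (q1 q2 b : ℝ) (hv : 0 < q1) (hw : q2 < 0) :
    ∃ t1 t2 : ℝ, q2 * (t1 * t2) = q1 ∧ q1 + 2*t1*b + t1^2*q2 = 0 ∧ q1 + 2*t2*b + t2^2*q2 = 0 := by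
  have hdisc : 0 < b^2 - q1*q2 := by nlinarith [sq_nonneg b]
  have hd2 : (Real.sqrt (b^2 - q1*q2))^2 = b^2 - q1*q2 := Real.sq_sqrt hdisc.le
  set d := Real.sqrt (b^2 - q1*q2)
  have hq2ne : q2 ≠ 0 := ne_of_lt hw
  refine ⟨(-b + d)/q2, (-b - d)/q2, ?_, ?_, ?_⟩
  · field_simp; nlinarith [hd2]
  · field_simp; nlinarith [hd2]
  · field_simp; nlinarith [hd2]

private lemma alg_combine_aux (q1 q2 p1 p2 c t1 t2 : ℝ) (hv : 0 < q1) (hw : q2 < 0)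
    (hprod : q2 * (t1 * t2) = q1)
    (hF1 : 0 ≤ p1 + 2*t1*c + t1^2*p2) (hF2 : 0 ≤ p1 + 2*t2*c + t2^2*p2) :
    p1 * q2 ≤ p2 * q1 := by
  have key : (-(q1*q2)) * (p1 + 2*t1*c + t1^2*p2) + (q2*t1)^2 * (p1 + 2*t2*c + t2^2*p2)
      = (q2*t1^2 - q1) * (q2*p1 - q1*p2) := by
    linear_combination (2*c*t1*q2 + p2*(q2*(t1*t2) + q1)) * hprod
  have hfac : q2*t1^2 - q1 < 0 := by nlinarith [sq_nonneg t1]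
  have h1 : 0 < -(q1*q2) := by nlinarith
  have h2 := mul_nonneg h1.le hF1
  have h3 := mul_nonneg (sq_nonneg (q2*t1)) hF2
  nlinarith [key, hfac, h2, h3]

private lemma pair_lemma_aux (J Jt : EuclideanSpace ℝ (Fin n) →ₗ[ℝ] EuclideanSpace ℝ (Fin n))
    (hJsa : ∀ v w : EuclideanSpace ℝ (Fin n), ⟪J v, w⟫ = ⟪v, J w⟫)
    (hJtsa : ∀ v w : EuclideanSpace ℝ (Fin n), ⟪Jt v, w⟫ = ⟪v, Jt w⟫)
    (hyp : ∀ v : EuclideanSpace ℝ (Fin n), ⟪J v, v⟫ = 0 → 0 ≤ ⟪Jt v, v⟫)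
    (v w : EuclideanSpace ℝ (Fin n)) (hv : 0 < ⟪J v, v⟫) (hw : ⟪J w, w⟫ < 0) :
    ⟪Jt v, v⟫ * ⟪J w, w⟫ ≤ ⟪Jt w, w⟫ * ⟪J v, v⟫ := by
  obtain ⟨t1, t2, hprod, hroot1, hroot2⟩ := alg_roots_aux ⟪J v, v⟫ ⟪J w, w⟫ ⟪J v, w⟫ hv hw
  have hF1 : 0 ≤ ⟪Jt v, v⟫ + 2*t1*⟪Jt v, w⟫ + t1^2*⟪Jt w, w⟫ := by
    have := hyp (v + t1 • w) (by rw [expand_quad_aux J hJsa v w t1]; linarith)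
    rw [expand_quad_aux Jt hJtsa v w t1] at this; linarith
  have hF2 : 0 ≤ ⟪Jt v, v⟫ + 2*t2*⟪Jt v, w⟫ + t2^2*⟪Jt w, w⟫ := by
    have := hyp (v + t2 • w) (by rw [expand_quad_aux J hJsa v w t2]; linarith)
    rw [expand_quad_aux Jt hJtsa v w t2] at this; linarith
  exact alg_combine_aux _ _ _ _ ⟪Jt v, w⟫ t1 t2 hv hw hprod hF1 hF2

private lemma core_lemma_aux (J Jt : EuclideanSpace ℝ (Fin n) →ₗ[ℝ] EuclideanSpace ℝ (Fin n))
    (hJsa : ∀ v w : EuclideanSpace ℝ (Fin n), ⟪J v, w⟫ = ⟪v, J w⟫)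
    (hJtsa : ∀ v w : EuclideanSpace ℝ (Fin n), ⟪Jt v, w⟫ = ⟪v, Jt w⟫)
    (hindefpos : ∃ v : EuclideanSpace ℝ (Fin n), 0 < ⟪J v, v⟫)
    (hindefneg : ∃ w : EuclideanSpace ℝ (Fin n), ⟪J w, w⟫ < 0)
    (hyp : ∀ v : EuclideanSpace ℝ (Fin n), ⟪J v, v⟫ = 0 → 0 ≤ ⟪Jt v, v⟫) :
    ∃ a : ℝ, ∀ v : EuclideanSpace ℝ (Fin n), a * ⟪J v, v⟫ ≤ ⟪Jt v, v⟫ := by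
  obtain ⟨v₀, hv₀⟩ := hindefpos
  obtain ⟨w₀, hw₀⟩ := hindefneg
  set S : Set ℝ := {x | ∃ w : EuclideanSpace ℝ (Fin n), ⟪J w, w⟫ < 0 ∧ x = ⟪Jt w, w⟫ / ⟪J w, w⟫}
    with hS
  have hne : S.Nonempty := ⟨_, w₀, hw₀, rfl⟩
  have hub : ∀ v : EuclideanSpace ℝ (Fin n), 0 < ⟪J v, v⟫ →
      ∀ x ∈ S, x ≤ ⟪Jt v, v⟫ / ⟪J v, v⟫ := by
    rintro v hv x ⟨w, hw, rfl⟩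
    have hp := pair_lemma_aux J Jt hJsa hJtsa hyp v w hv hw
    rw [div_le_iff_of_neg hw, div_mul_eq_mul_div, div_le_iff₀ hv]
    exact hp
  have hbdd : BddAbove S := ⟨_, hub v₀ hv₀⟩
  refine ⟨sSup S, fun v => ?_⟩
  rcases lt_trichotomy (⟪J v, v⟫ : ℝ) 0 with hneg | hzero | hpos
  · have hmem : ⟪Jt v, v⟫ / ⟪J v, v⟫ ∈ S := ⟨v, hneg, rfl⟩
    have h1 : ⟪Jt v, v⟫ / ⟪J v, v⟫ ≤ sSup S := le_csSup hbdd hmem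
    have h2 := mul_le_mul_of_nonpos_right h1 hneg.le
    rwa [div_mul_cancel₀ _ (ne_of_lt hneg)] at h2
  · rw [hzero, mul_zero]
    exact hyp v hzero
  · have h1 : sSup S ≤ ⟪Jt v, v⟫ / ⟪J v, v⟫ := csSup_le hne (hub v hpos)
    have h2 := mul_le_mul_of_nonneg_right h1 hpos.le
    rwa [div_mul_cancel₀ _ (ne_of_gt hpos)] at h2

end Aux

/-- Let `V = ℝⁿ` (`n ≥ 2`) carry a non-degenerate indefinite quadratic form
`𝕁 v := ⟪J v, v⟫` given by an invertible self-adjoint operator `J`, and let `J̃` be a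
self-adjoint operator. If `⟪J̃ v, v⟫ ≥ 0` whenever `𝕁 v = 0`, then there is `a ∈ ℝ` with
`⟪J̃ v, v⟫ ≥ a·𝕁(v)` for all `v`; if moreover `⟪J̃ v, v⟫ > 0` for all nonzero `v` with
`𝕁 v = 0`, then there is `a ∈ ℝ` with `⟪J̃ v, v⟫ > a·𝕁(v)` for all nonzero `v`. -/
theorem stmt_2 {n : ℕ} (hn : 2 ≤ n)
    (J : EuclideanSpace ℝ (Fin n) →ₗ[ℝ] EuclideanSpace ℝ (Fin n))
    (hJinv : Function.Bijective J)
    (hJsa : ∀ v w : EuclideanSpace ℝ (Fin n), ⟪J v, w⟫ = ⟪v, J w⟫)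
    (hindefpos : ∃ v : EuclideanSpace ℝ (Fin n), 0 < ⟪J v, v⟫)
    (hindefneg : ∃ w : EuclideanSpace ℝ (Fin n), ⟪J w, w⟫ < 0)
    (Jt : EuclideanSpace ℝ (Fin n) →ₗ[ℝ] EuclideanSpace ℝ (Fin n))
    (hJtsa : ∀ v w : EuclideanSpace ℝ (Fin n), ⟪Jt v, w⟫ = ⟪v, Jt w⟫) :
    ((∀ v : EuclideanSpace ℝ (Fin n), ⟪J v, v⟫ = 0 → 0 ≤ ⟪Jt v, v⟫) →
      ∃ a : ℝ, ∀ v : EuclideanSpace ℝ (Fin n), a * ⟪J v, v⟫ ≤ ⟪Jt v, v⟫) ∧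
    ((∀ v : EuclideanSpace ℝ (Fin n), v ≠ 0 → ⟪J v, v⟫ = 0 → 0 < ⟪Jt v, v⟫) →
      ∃ a : ℝ, ∀ v : EuclideanSpace ℝ (Fin n), v ≠ 0 → a * ⟪J v, v⟫ < ⟪Jt v, v⟫) := by
  constructor
  · intro hyp
    exact core_lemma_aux J Jt hJsa hJtsa hindefpos hindefneg hyp
  · intro hyp
    -- Find ε > 0 with  ε * ‖v‖² ≤ ⟪Jt v, v⟫  on the null cone of J.
    have hεex : ∃ ε : ℝ, 0 < ε ∧ ∀ v : EuclideanSpace ℝ (Fin n),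
        ⟪J v, v⟫ = 0 → ε * ‖v‖^2 ≤ ⟪Jt v, v⟫ := by
      set K : Set (EuclideanSpace ℝ (Fin n)) :=
        Metric.sphere 0 1 ∩ {v | ⟪J v, v⟫ = 0} with hK
      have hQcont : Continuous fun v : EuclideanSpace ℝ (Fin n) => (⟪J v, v⟫ : ℝ) :=
        (J.continuous_of_finiteDimensional.inner continuous_id)
      have hPcont : Continuous fun v : EuclideanSpace ℝ (Fin n) => (⟪Jt v, v⟫ : ℝ) :=
        (Jt.continuous_of_finiteDimensional.inner continuous_id)
      have hKcompact : IsCompact K :=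
        (isCompact_sphere 0 1).inter_right (isClosed_eq hQcont continuous_const)
      -- scaling to the sphere
      have hscale : ∀ (ε : ℝ), (∀ u ∈ K, ε ≤ ⟪Jt u, u⟫) →
          ∀ v : EuclideanSpace ℝ (Fin n), ⟪J v, v⟫ = 0 → ε * ‖v‖^2 ≤ ⟪Jt v, v⟫ := by
        intro ε hε v hQv
        rcases eq_or_ne v 0 with rfl | hv0
        · simp
        · have hnorm : (0:ℝ) < ‖v‖ := norm_pos_iff.mpr hv0
          set u : EuclideanSpace ℝ (Fin n) := ‖v‖⁻¹ • v with hu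
          have huK : u ∈ K := by
            constructor
            · simp [hu, norm_smul, abs_of_nonneg (inv_nonneg.mpr hnorm.le),
                inv_mul_cancel₀ (ne_of_gt hnorm)]
            · show ⟪J u, u⟫ = 0
              rw [hu, smul_quad_aux, hQv, mul_zero]
          have h1 := hε u huK
          have h2 : ⟪Jt u, u⟫ = ‖v‖⁻¹^2 * ⟪Jt v, v⟫ := by rw [hu, smul_quad_aux]
          rw [h2] at h1
          have h3 : (0:ℝ) < ‖v‖^2 := by positivity
          calc ε * ‖v‖^2 ≤ (‖v‖⁻¹^2 * ⟪Jt v, v⟫) * ‖v‖^2 :=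
                mul_le_mul_of_nonneg_right h1 h3.le
            _ = ⟪Jt v, v⟫ := by field_simp
      rcases K.eq_empty_or_nonempty with hKe | hKne
      · refine ⟨1, one_pos, hscale 1 ?_⟩
        intro u hu
        rw [hKe] at hu
        exact absurd hu (Set.notMem_empty u)
      · obtain ⟨z, hzK, hzmin⟩ := hKcompact.exists_isMinOn hKne hPcont.continuousOn
        have hz0 : z ≠ 0 := by
          intro h
          have := hzK.1
          rw [h] at this
          simp at this
        have hzpos : 0 < ⟪Jt z, z⟫ := hyp z hz0 hzK.2
        refine ⟨⟪Jt z, z⟫, hzpos, hscale _ ?_⟩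
        intro u hu
        exact hzmin hu
    obtain ⟨ε, hεpos, hε⟩ := hεex
    -- apply the nonstrict result to  Jt - ε • id
    set Jt' : EuclideanSpace ℝ (Fin n) →ₗ[ℝ] EuclideanSpace ℝ (Fin n) :=
      Jt - ε • LinearMap.id with hJt'
    have happ : ∀ v : EuclideanSpace ℝ (Fin n), ⟪Jt' v, v⟫ = ⟪Jt v, v⟫ - ε * ‖v‖^2 := by
      intro v
      rw [hJt']
      simp only [LinearMap.sub_apply, LinearMap.smul_apply, LinearMap.id_apply,
        inner_sub_left, real_inner_smul_left]
      rw [real_inner_self_eq_norm_sq]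
    have hJt'sa : ∀ v w : EuclideanSpace ℝ (Fin n), ⟪Jt' v, w⟫ = ⟪v, Jt' w⟫ := by
      intro v w
      rw [hJt']
      simp only [LinearMap.sub_apply, LinearMap.smul_apply, LinearMap.id_apply,
        inner_sub_left, inner_sub_right, real_inner_smul_left, real_inner_smul_right]
      rw [hJtsa]
    have hyp' : ∀ v : EuclideanSpace ℝ (Fin n), ⟪J v, v⟫ = 0 → 0 ≤ ⟪Jt' v, v⟫ := by
      intro v hv
      rw [happ]
      linarith [hε v hv]
    obtain ⟨a, ha⟩ := core_lemma_aux J Jt' hJsa hJt'sa hindefpos hindefneg hyp'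
    refine ⟨a, fun v hv => ?_⟩
    have h1 := ha v
    rw [happ] at h1
    have h2 : (0:ℝ) < ε * ‖v‖^2 := by
      have : (0:ℝ) < ‖v‖ := norm_pos_iff.mpr hv
      positivity
    linarith
end

section
/- Let L : V → V be an invertible J-separated linear operator, and set ρ₊(L) := inf{ 𝕁(Lv)/𝕁(v) : 𝕁(v) > 0 } and ρ₋(L) := sup{ 𝕁(Lv)/𝕁(v) : 𝕁(v) < 0 }. Then L is J-monotone if and only if ρ₋(L) ≤ 1 and ρ₊(L) ≥ 1. If moreover L is strictly J-separated, then L is strictly J-monotone if and only if ρ₋(L) < 1 and ρ₊(L) > 1. -/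
open scoped RealInnerProductSpace

noncomputable section

set_option maxHeartbeats 1000000 in
lemma small_eps (A B C σ : ℝ) (hσ : σ = 1 ∨ σ = -1)
    (H : ∀ ε : ℝ, 0 < σ * ε → 0 ≤ A + B * ε + C * ε ^ 2) : 0 ≤ A := by
  by_contra hA
  push_neg at hA
  set M : ℝ := |B| + |C| + 1 with hM
  have hMpos : 0 < M := by positivity
  set δ : ℝ := min 1 (-A / (2 * M)) with hδ
  have hδpos : 0 < δ := lt_min one_pos (div_pos (by linarith) (by positivity))
  have hδ1 : δ ≤ 1 := min_le_left _ _
  have hδ2 : δ ≤ -A / (2 * M) := min_le_right _ _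
  have hδ2' : δ * (2 * M) ≤ -A := (le_div_iff₀ (by positivity)).mp hδ2
  have hσ2 : σ * σ = 1 := by rcases hσ with h | h <;> rw [h] <;> norm_num
  have h := H (σ * δ) (by nlinarith)
  have hB : B * (σ * δ) ≤ |B| * δ := by
    calc B * (σ * δ) ≤ |B * (σ * δ)| := le_abs_self _
    _ = |B| * (|σ| * δ) := by rw [abs_mul, abs_mul, abs_of_pos hδpos]
    _ = |B| * δ := by rcases hσ with h | h <;> rw [h] <;> norm_num
  have hC : C * (σ * δ) ^ 2 ≤ |C| * δ := by
    have hsq : (σ * δ) ^ 2 = δ ^ 2 := by nlinarith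
    rw [hsq]
    calc C * δ ^ 2 ≤ |C| * δ ^ 2 := by nlinarith [le_abs_self C, abs_nonneg C, sq_nonneg δ]
    _ ≤ |C| * δ := by nlinarith [abs_nonneg C, mul_nonneg (abs_nonneg C) hδpos.le]
  nlinarith [abs_nonneg B, abs_nonneg C]

lemma div_le_div_cross {p q r s : ℝ} (hq : q < 0) (hs : 0 < s) (h : q * r ≤ s * p) :
    p / q ≤ r / s := by
  rw [show p / q = (-p) / (-q) by rw [neg_div_neg_eq]]
  rw [div_le_div_iff₀ (by linarith) hs]
  nlinarith

lemma div_le_one_of_neg' {x c : ℝ} (hc : c < 0) (h : c ≤ x) : x / c ≤ 1 := by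
  rw [show x / c = (-x) / (-c) by rw [neg_div_neg_eq]]
  rw [div_le_one (by linarith)]
  linarith

lemma div_lt_one_of_neg' {x c : ℝ} (hc : c < 0) (h : c < x) : x / c < 1 := by
  rw [show x / c = (-x) / (-c) by rw [neg_div_neg_eq]]
  rw [div_lt_one (by linarith)]
  linarith

set_option maxHeartbeats 1000000 in
lemma quad_key (a b c a' b' c' : ℝ) (ha : 0 < a) (hc : c < 0) (ha' : 0 < a')
    (H : ∀ t : ℝ, 0 < c * t ^ 2 + 2 * b * t + a → 0 ≤ c' * t ^ 2 + 2 * b' * t + a') :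
    c * a' ≤ a * c' := by
  rcases le_or_gt 0 c' with hc' | hc'
  · nlinarith
  by_contra hcon
  push_neg at hcon   -- a * c' < c * a'
  have hcne : c ≠ 0 := hc.ne
  have hD : 0 < b ^ 2 - c * a := by nlinarith
  have hD' : 0 < b' ^ 2 - c' * a' := by nlinarith
  set sq : ℝ := Real.sqrt (b ^ 2 - c * a) with hsqdef
  set sq' : ℝ := Real.sqrt (b' ^ 2 - c' * a') with hsq'def
  have hsq : sq ^ 2 = b ^ 2 - c * a := Real.sq_sqrt hD.le
  have hsq' : sq' ^ 2 = b' ^ 2 - c' * a' := Real.sq_sqrt hD'.le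
  have hsqpos : 0 < sq := Real.sqrt_pos.mpr hD
  have hsq'pos : 0 < sq' := Real.sqrt_pos.mpr hD'
  clear_value sq sq'
  set u : ℝ := -b + sq with hudef
  set v : ℝ := -b - sq with hvdef
  set u' : ℝ := -b' + sq' with hu'def
  set v' : ℝ := -b' - sq' with hv'def
  clear_value u v u' v'
  have hu : 0 < u := by nlinarith [hudef]
  have hv : v < 0 := by nlinarith [hvdef]
  have hu' : 0 < u' := by nlinarith [hu'def]
  have hv' : v' < 0 := by nlinarith [hv'def]
  have huv : u * v = c * a := by rw [hudef, hvdef]; linear_combination -hsq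
  have hu'v' : u' * v' = c' * a' := by rw [hu'def, hv'def]; linear_combination -hsq'
  set γ : ℝ := -c with hγdef
  set γ' : ℝ := -c' with hγ'def
  clear_value γ γ'
  have hγ : 0 < γ := by rw [hγdef]; linarith
  have hγ' : 0 < γ' := by rw [hγ'def]; linarith
  have hγ'ne : γ' ≠ 0 := hγ'.ne'
  -- factorizations
  have hfq : ∀ t : ℝ, c * (c * t ^ 2 + 2 * b * t + a) = (c * t - u) * (c * t - v) := by
    intro t; rw [hudef, hvdef]; linear_combination hsq
  have hfp : ∀ t : ℝ, c' * (c' * t ^ 2 + 2 * b' * t + a') = (c' * t - u') * (c' * t - v') := by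
    intro t; rw [hu'def, hv'def]; linear_combination hsq'
  -- product comparison
  have e1 : γ ^ 2 = c ^ 2 := by rw [hγdef]; ring
  have e2 : γ' ^ 2 = c' ^ 2 := by rw [hγ'def]; ring
  have hprod : (u * v) * γ' ^ 2 < (u' * v') * γ ^ 2 := by
    rw [huv, hu'v', e1, e2]
    nlinarith [mul_lt_mul_of_pos_right hcon (mul_pos_of_neg_of_neg hc hc')]
  have hdich : u' * γ < u * γ' ∨ v * γ' < v' * γ := by
    by_contra hd
    push_neg at hd
    obtain ⟨h1, h2⟩ := hd
    nlinarith [mul_le_mul h1 (show (-v) * γ' ≤ (-v') * γ by linarith)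
        (by nlinarith) (by positivity)]
  have hrel : ∀ t : ℝ, c' * t * γ = c * t * γ' := by
    intro t; rw [hγdef, hγ'def]; ring
  rcases hdich with hcase | hcase
  · -- pick X with v < X < u and X * γ' > u' * γ
    have hXγ' : ((u' * γ / γ' + u) / 2) * γ' = (u' * γ + u * γ') / 2 := by
      field_simp
    set X : ℝ := (u' * γ / γ' + u) / 2 with hX
    have hX1 : X < u := by
      have h5 : X * γ' < u * γ' := by rw [hXγ']; linarith
      exact lt_of_mul_lt_mul_right h5 hγ'.le
    have hX2 : v < X := by
      have h5 : v * γ' < X * γ' := by rw [hXγ']; nlinarith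
      exact lt_of_mul_lt_mul_right h5 hγ'.le
    have hX3 : u' * γ < X * γ' := by rw [hXγ']; linarith
    have hct : c * (X / c) = X := by field_simp
    have hqt : 0 < c * (X / c) ^ 2 + 2 * b * (X / c) + a := by
      have h1 := hfq (X / c)
      rw [hct] at h1
      nlinarith
    have hpt := H (X / c) hqt
    have h2 := hfp (X / c)
    have hc't : u' < c' * (X / c) := by
      have h6 : c' * (X / c) * γ = X * γ' := by rw [hrel (X / c), hct]
      have h3 : u' * γ < c' * (X / c) * γ := by rw [h6]; exact hX3
      exact lt_of_mul_lt_mul_right h3 hγ.le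
    nlinarith
  · -- pick X with v < X < u and X * γ' < v' * γ
    have hXγ' : ((v + v' * γ / γ') / 2) * γ' = (v * γ' + v' * γ) / 2 := by
      field_simp
    set X : ℝ := (v + v' * γ / γ') / 2 with hX
    have hX1 : v < X := by
      have h5 : v * γ' < X * γ' := by rw [hXγ']; linarith
      exact lt_of_mul_lt_mul_right h5 hγ'.le
    have hX2 : X < u := by
      have h5 : X * γ' < u * γ' := by rw [hXγ']; nlinarith
      exact lt_of_mul_lt_mul_right h5 hγ'.le
    have hX3 : X * γ' < v' * γ := by rw [hXγ']; linarith
    have hct : c * (X / c) = X := by field_simp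
    have hqt : 0 < c * (X / c) ^ 2 + 2 * b * (X / c) + a := by
      have h1 := hfq (X / c)
      rw [hct] at h1
      nlinarith
    have hpt := H (X / c) hqt
    have h2 := hfp (X / c)
    have hc't : c' * (X / c) < v' := by
      have h6 : c' * (X / c) * γ = X * γ' := by rw [hrel (X / c), hct]
      have h3 : c' * (X / c) * γ < v' * γ := by rw [h6]; exact hX3
      exact lt_of_mul_lt_mul_right h3 hγ.le
    nlinarith

lemma split_div (X c : ℝ) (hc : c ≠ 0) : X / c = 1 + (X - c) / c := by
  field_simp
  ring
/-- The positive cone `C₊ = {0} ∪ {v | ⟪J v, v⟫ > 0}`. -/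
def posCone {n : ℕ} (J : EuclideanSpace ℝ (Fin n) →ₗ[ℝ] EuclideanSpace ℝ (Fin n)) :
    Set (EuclideanSpace ℝ (Fin n)) :=
  {0} ∪ {v | 0 < ⟪J v, v⟫}

/-- The zero set `C₀ = {v | ⟪J v, v⟫ = 0}`. -/
def zeroCone {n : ℕ} (J : EuclideanSpace ℝ (Fin n) →ₗ[ℝ] EuclideanSpace ℝ (Fin n)) :
    Set (EuclideanSpace ℝ (Fin n)) :=
  {v | ⟪J v, v⟫ = 0}

/-- `L` is `J`-separated: `L(C₊) ⊆ C₊`. -/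
def JSeparated {n : ℕ} (J L : EuclideanSpace ℝ (Fin n) →ₗ[ℝ] EuclideanSpace ℝ (Fin n)) : Prop :=
  ∀ v ∈ posCone J, L v ∈ posCone J

/-- `L` is strictly `J`-separated: `L(C₊ ∪ C₀) ⊆ C₊`. -/
def StrictJSeparated {n : ℕ}
    (J L : EuclideanSpace ℝ (Fin n) →ₗ[ℝ] EuclideanSpace ℝ (Fin n)) : Prop :=
  ∀ v ∈ posCone J ∪ zeroCone J, L v ∈ posCone J

/-- `ρ₊(L) = inf { 𝕁(Lv)/𝕁(v) : 𝕁(v) > 0 }`. -/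
def rhoPlus {n : ℕ} (J L : EuclideanSpace ℝ (Fin n) →ₗ[ℝ] EuclideanSpace ℝ (Fin n)) : ℝ :=
  sInf {r : ℝ | ∃ v : EuclideanSpace ℝ (Fin n), 0 < ⟪J v, v⟫ ∧ r = ⟪J (L v), L v⟫ / ⟪J v, v⟫}

/-- `ρ₋(L) = sup { 𝕁(Lv)/𝕁(v) : 𝕁(v) < 0 }`. -/
def rhoMinus {n : ℕ} (J L : EuclideanSpace ℝ (Fin n) →ₗ[ℝ] EuclideanSpace ℝ (Fin n)) : ℝ :=
  sSup {r : ℝ | ∃ v : EuclideanSpace ℝ (Fin n), ⟪J v, v⟫ < 0 ∧ r = ⟪J (L v), L v⟫ / ⟪J v, v⟫}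

/-- **Proposition 2.4(3).** An invertible `J`-separated operator `L` is `J`-monotone iff
`ρ₋(L) ≤ 1` and `ρ₊(L) ≥ 1`; if moreover `L` is strictly `J`-separated, then `L` is strictly
`J`-monotone iff `ρ₋(L) < 1` and `ρ₊(L) > 1`. -/
theorem stmt_4 {n : ℕ} (hn : 2 ≤ n)
    (J : EuclideanSpace ℝ (Fin n) →ₗ[ℝ] EuclideanSpace ℝ (Fin n))
    (hJinv : Function.Bijective J)
    (hJsa : ∀ v w : EuclideanSpace ℝ (Fin n), ⟪J v, w⟫ = ⟪v, J w⟫)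
    (hindefpos : ∃ v : EuclideanSpace ℝ (Fin n), 0 < ⟪J v, v⟫)
    (hindefneg : ∃ w : EuclideanSpace ℝ (Fin n), ⟪J w, w⟫ < 0)
    (L : EuclideanSpace ℝ (Fin n) →ₗ[ℝ] EuclideanSpace ℝ (Fin n))
    (hLinv : Function.Bijective L)
    (hLsep : JSeparated J L) :
    ((∀ v : EuclideanSpace ℝ (Fin n), ⟪J v, v⟫ ≤ ⟪J (L v), L v⟫) ↔
      (rhoMinus J L ≤ 1 ∧ 1 ≤ rhoPlus J L)) ∧
    (StrictJSeparated J L →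
      ((∀ v : EuclideanSpace ℝ (Fin n), v ≠ 0 → ⟪J v, v⟫ < ⟪J (L v), L v⟫) ↔
        (rhoMinus J L < 1 ∧ 1 < rhoPlus J L))) := by
  classical
  -- notation
  set Sp : Set ℝ :=
    {r : ℝ | ∃ v : EuclideanSpace ℝ (Fin n), 0 < ⟪J v, v⟫ ∧ r = ⟪J (L v), L v⟫ / ⟪J v, v⟫}
    with hSpdef
  set Sm : Set ℝ :=
    {r : ℝ | ∃ v : EuclideanSpace ℝ (Fin n), ⟪J v, v⟫ < 0 ∧ r = ⟪J (L v), L v⟫ / ⟪J v, v⟫}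
    with hSmdef
  have hrp : rhoPlus J L = sInf Sp := rfl
  have hrm : rhoMinus J L = sSup Sm := rfl
  obtain ⟨v₀, hv₀⟩ := hindefpos
  obtain ⟨w₀, hw₀⟩ := hindefneg
  -- expansion of the quadratic form
  have hexp : ∀ (u w : EuclideanSpace ℝ (Fin n)) (t : ℝ),
      ⟪J (u + t • w), u + t • w⟫ =
        ⟪J w, w⟫ * t ^ 2 + 2 * ⟪J u, w⟫ * t + ⟪J u, u⟫ := by
    intro u w t
    have h1 : ⟪J w, u⟫ = ⟪J u, w⟫ := by rw [hJsa w u, real_inner_comm]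
    simp only [map_add, map_smul, inner_add_left, inner_add_right,
      real_inner_smul_left, real_inner_smul_right]
    rw [h1]; ring
  have hQ0 : ⟪J (0 : EuclideanSpace ℝ (Fin n)), (0 : EuclideanSpace ℝ (Fin n))⟫ = 0 := by
    simp
  -- separation consequences
  have hQLnonneg : ∀ x : EuclideanSpace ℝ (Fin n), 0 < ⟪J x, x⟫ → 0 ≤ ⟪J (L x), L x⟫ := by
    intro x hx
    have hmem : L x ∈ posCone J := hLsep x (Or.inr hx)
    rcases hmem with h | h
    · have : L x = 0 := h
      rw [this, hQ0]
    · exact le_of_lt h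
  have hQLpos : ∀ x : EuclideanSpace ℝ (Fin n), 0 < ⟪J x, x⟫ → 0 < ⟪J (L x), L x⟫ := by
    intro x hx
    have hmem : L x ∈ posCone J := hLsep x (Or.inr hx)
    rcases hmem with h | h
    · exfalso
      have hx0 : x = 0 := hLinv.injective (by rw [show L x = 0 from h, map_zero])
      rw [hx0, hQ0] at hx
      exact lt_irrefl _ hx
    · exact h
  -- the cross inequality from quad_key
  have hcross : ∀ u w : EuclideanSpace ℝ (Fin n), 0 < ⟪J u, u⟫ → ⟪J w, w⟫ < 0 →
      ⟪J w, w⟫ * ⟪J (L u), L u⟫ ≤ ⟪J u, u⟫ * ⟪J (L w), L w⟫ := by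
    intro u w hu hw
    refine quad_key ⟪J u, u⟫ ⟪J u, w⟫ ⟪J w, w⟫ ⟪J (L u), L u⟫ ⟪J (L u), L w⟫ ⟪J (L w), L w⟫
      hu hw (hQLpos u hu) ?_
    intro t hq
    have hq' : 0 < ⟪J (u + t • w), u + t • w⟫ := by rw [hexp]; exact hq
    have h0 : 0 ≤ ⟪J (L (u + t • w)), L (u + t • w)⟫ := hQLnonneg _ hq'
    rw [map_add, map_smul, hexp (L u) (L w) t] at h0
    exact h0
  have hSpne : Sp.Nonempty := ⟨_, v₀, hv₀, rfl⟩
  have hSmne : Sm.Nonempty := ⟨_, w₀, hw₀, rfl⟩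
  have hSpbdd : BddBelow Sp := by
    refine ⟨⟪J (L w₀), L w₀⟫ / ⟪J w₀, w₀⟫, ?_⟩
    rintro r ⟨v, hv, rfl⟩
    exact div_le_div_cross hw₀ hv (hcross v w₀ hv hw₀)
  have hSmbdd : BddAbove Sm := by
    refine ⟨⟪J (L v₀), L v₀⟫ / ⟪J v₀, v₀⟫, ?_⟩
    rintro r ⟨w, hw, rfl⟩
    exact div_le_div_cross hw hv₀ (hcross v₀ w hv₀ hw)
  -- case analysis lemmas for the converse directions
  have hposcase : ∀ v : EuclideanSpace ℝ (Fin n), 1 ≤ sInf Sp → 0 < ⟪J v, v⟫ →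
      ⟪J v, v⟫ ≤ ⟪J (L v), L v⟫ := by
    intro v h1 hv
    have hr : sInf Sp ≤ ⟪J (L v), L v⟫ / ⟪J v, v⟫ := csInf_le hSpbdd ⟨v, hv, rfl⟩
    exact (one_le_div hv).mp (le_trans h1 hr)
  have hposcase' : ∀ v : EuclideanSpace ℝ (Fin n), 1 < sInf Sp → 0 < ⟪J v, v⟫ →
      ⟪J v, v⟫ < ⟪J (L v), L v⟫ := by
    intro v h1 hv
    have hr : sInf Sp ≤ ⟪J (L v), L v⟫ / ⟪J v, v⟫ := csInf_le hSpbdd ⟨v, hv, rfl⟩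
    exact (one_lt_div hv).mp (lt_of_lt_of_le h1 hr)
  have hnegcase : ∀ v : EuclideanSpace ℝ (Fin n), sSup Sm ≤ 1 → ⟪J v, v⟫ < 0 →
      ⟪J v, v⟫ ≤ ⟪J (L v), L v⟫ := by
    intro v h1 hv
    have hr : ⟪J (L v), L v⟫ / ⟪J v, v⟫ ≤ sSup Sm := le_csSup hSmbdd ⟨v, hv, rfl⟩
    have h2 : ⟪J (L v), L v⟫ / ⟪J v, v⟫ ≤ 1 := le_trans hr h1
    have h4 : (⟪J (L v), L v⟫ / ⟪J v, v⟫) * ⟪J v, v⟫ = ⟪J (L v), L v⟫ :=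
      div_mul_cancel₀ _ (ne_of_lt hv)
    have h5 := mul_le_mul_of_nonpos_right h2 hv.le
    rw [h4, one_mul] at h5
    exact h5
  have hnegcase' : ∀ v : EuclideanSpace ℝ (Fin n), sSup Sm < 1 → ⟪J v, v⟫ < 0 →
      ⟪J v, v⟫ < ⟪J (L v), L v⟫ := by
    intro v h1 hv
    have hr : ⟪J (L v), L v⟫ / ⟪J v, v⟫ ≤ sSup Sm := le_csSup hSmbdd ⟨v, hv, rfl⟩
    have h2 : ⟪J (L v), L v⟫ / ⟪J v, v⟫ < 1 := lt_of_le_of_lt hr h1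
    have h4 : (⟪J (L v), L v⟫ / ⟪J v, v⟫) * ⟪J v, v⟫ = ⟪J (L v), L v⟫ :=
      div_mul_cancel₀ _ (ne_of_lt hv)
    have h5 := mul_lt_mul_of_neg_right h2 hv
    rw [h4, one_mul] at h5
    exact h5
  have hzerocase : ∀ v : EuclideanSpace ℝ (Fin n), ⟪J v, v⟫ = 0 →
      0 ≤ ⟪J (L v), L v⟫ := by
    intro v hv
    set B : ℝ := ⟪J v, v₀⟫ with hB
    set σ : ℝ := if 0 ≤ B then (1 : ℝ) else -1 with hσ
    refine small_eps _ (2 * ⟪J (L v), L v₀⟫) ⟪J (L v₀), L v₀⟫ σ ?_ ?_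
    · rw [hσ]; split_ifs <;> simp
    intro ε hε
    have hq : 0 < ⟪J (v + ε • v₀), v + ε • v₀⟫ := by
      rw [hexp, hv]
      rw [hσ] at hε
      split_ifs at hε with hBs
      · rw [one_mul] at hε
        rcases lt_or_eq_of_le hBs with hBpos | hBzero
        · nlinarith [hB, hv₀, mul_pos hv₀ (pow_pos hε 2), hε]
        · nlinarith [hB, hv₀, mul_pos hv₀ (pow_pos hε 2), hε]
      · push_neg at hBs
        nlinarith [hB, hv₀, mul_nonneg hv₀.le (sq_nonneg ε), hε]
    have h0 : 0 ≤ ⟪J (L (v + ε • v₀)), L (v + ε • v₀)⟫ := hQLnonneg _ hq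
    rw [map_add, map_smul, hexp (L v) (L v₀) ε] at h0
    linarith
  -- strict part: compactness of the unit sphere
  have hQsmul : ∀ (c : ℝ) (x : EuclideanSpace ℝ (Fin n)),
      ⟪J (c • x), c • x⟫ = c ^ 2 * ⟪J x, x⟫ := by
    intro c x
    simp only [map_smul, real_inner_smul_left, real_inner_smul_right]
    ring
  have hstrictbounds : (∀ v : EuclideanSpace ℝ (Fin n), v ≠ 0 → ⟪J v, v⟫ < ⟪J (L v), L v⟫) →
      sSup Sm < 1 ∧ 1 < sInf Sp := by
    intro hsm
    have hJc : Continuous J := J.continuous_of_finiteDimensional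
    have hLc : Continuous L := L.continuous_of_finiteDimensional
    have hQc : Continuous (fun x : EuclideanSpace ℝ (Fin n) => ⟪J x, x⟫) :=
      hJc.inner continuous_id
    have hQLc : Continuous (fun x : EuclideanSpace ℝ (Fin n) => ⟪J (L x), L x⟫) :=
      (hJc.comp hLc).inner hLc
    have hgc : Continuous
        (fun x : EuclideanSpace ℝ (Fin n) => ⟪J (L x), L x⟫ - ⟪J x, x⟫) := hQLc.sub hQc
    have hv₀ne : v₀ ≠ 0 := by rintro rfl; rw [hQ0] at hv₀; exact lt_irrefl _ hv₀
    have hv₀mem : ‖v₀‖⁻¹ • v₀ ∈ Metric.sphere (0 : EuclideanSpace ℝ (Fin n)) 1 := by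
      rw [mem_sphere_zero_iff_norm]; exact norm_smul_inv_norm hv₀ne
    have hsphne : (Metric.sphere (0 : EuclideanSpace ℝ (Fin n)) 1).Nonempty := ⟨_, hv₀mem⟩
    have hne0 : ∀ x ∈ Metric.sphere (0 : EuclideanSpace ℝ (Fin n)) 1, x ≠ 0 := by
      intro x hx h0
      rw [mem_sphere_zero_iff_norm, h0, norm_zero] at hx
      norm_num at hx
    obtain ⟨x₀, hx₀s, hx₀min⟩ :=
      (isCompact_sphere (0 : EuclideanSpace ℝ (Fin n)) 1).exists_isMinOn hsphne hgc.continuousOn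
    obtain ⟨y₀, hy₀s, hy₀max⟩ :=
      (isCompact_sphere (0 : EuclideanSpace ℝ (Fin n)) 1).exists_isMaxOn hsphne
        (continuous_abs.comp hQc).continuousOn
    set δ : ℝ := ⟪J (L x₀), L x₀⟫ - ⟪J x₀, x₀⟫ with hδdef
    have hδpos : 0 < δ := by
      have := hsm x₀ (hne0 _ hx₀s)
      rw [hδdef]; linarith
    set M : ℝ := |⟪J y₀, y₀⟫| with hMdef
    have hMb : ∀ x ∈ Metric.sphere (0 : EuclideanSpace ℝ (Fin n)) 1, |⟪J x, x⟫| ≤ M :=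
      fun x hx => isMaxOn_iff.mp hy₀max x hx
    have hδb : ∀ x ∈ Metric.sphere (0 : EuclideanSpace ℝ (Fin n)) 1,
        δ ≤ ⟪J (L x), L x⟫ - ⟪J x, x⟫ := fun x hx => isMinOn_iff.mp hx₀min x hx
    have hMpos : 0 < M := by
      have h1 : 0 < ⟪J (‖v₀‖⁻¹ • v₀), ‖v₀‖⁻¹ • v₀⟫ := by
        rw [hQsmul]
        have : (0:ℝ) < ‖v₀‖ := norm_pos_iff.mpr hv₀ne
        positivity
      calc (0:ℝ) < ⟪J (‖v₀‖⁻¹ • v₀), ‖v₀‖⁻¹ • v₀⟫ := h1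
      _ ≤ |⟪J (‖v₀‖⁻¹ • v₀), ‖v₀‖⁻¹ • v₀⟫| := le_abs_self _
      _ ≤ M := hMb _ hv₀mem
    have hkey : ∀ v : EuclideanSpace ℝ (Fin n), v ≠ 0 →
        ∃ u : EuclideanSpace ℝ (Fin n),
          ⟪J v, v⟫ = ‖v‖ ^ 2 * ⟪J u, u⟫ ∧
          ⟪J (L v), L v⟫ = ‖v‖ ^ 2 * ⟪J (L u), L u⟫ ∧
          δ ≤ ⟪J (L u), L u⟫ - ⟪J u, u⟫ ∧ |⟪J u, u⟫| ≤ M := by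
      intro v hvne
      have hvnorm : (0:ℝ) < ‖v‖ := norm_pos_iff.mpr hvne
      have humem : ‖v‖⁻¹ • v ∈ Metric.sphere (0 : EuclideanSpace ℝ (Fin n)) 1 := by
        rw [mem_sphere_zero_iff_norm]; exact norm_smul_inv_norm hvne
      have hvu : ‖v‖ • (‖v‖⁻¹ • v) = v := smul_inv_smul₀ hvnorm.ne' v
      refine ⟨‖v‖⁻¹ • v, ?_, ?_, hδb _ humem, hMb _ humem⟩
      · have h := hQsmul ‖v‖ (‖v‖⁻¹ • v)
        rw [hvu] at h
        exact h
      · have h := hQsmul ‖v‖ (L (‖v‖⁻¹ • v))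
        rw [← map_smul, hvu] at h
        exact h
    have hδM : 0 < δ / M := div_pos hδpos hMpos
    constructor
    · -- sSup Sm < 1
      have hb : sSup Sm ≤ 1 - δ / M := by
        refine csSup_le hSmne ?_
        rintro r ⟨v, hv, rfl⟩
        have hvne : v ≠ 0 := by rintro rfl; rw [hQ0] at hv; exact lt_irrefl _ hv
        obtain ⟨u, he1, he2, hge, habs⟩ := hkey v hvne
        have hvnorm : (0:ℝ) < ‖v‖ := norm_pos_iff.mpr hvne
        have hQuneg : ⟪J u, u⟫ < 0 := by nlinarith [he1, hv, sq_nonneg ‖v‖]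
        have hratio : ⟪J (L v), L v⟫ / ⟪J v, v⟫ = ⟪J (L u), L u⟫ / ⟪J u, u⟫ := by
          rw [he1, he2, mul_div_mul_left _ _ (by positivity : (‖v‖:ℝ) ^ 2 ≠ 0)]
        rw [hratio]
        have hMu : -⟪J u, u⟫ ≤ M := le_trans (neg_le_abs _) habs
        have hdd : δ / M ≤ (⟪J (L u), L u⟫ - ⟪J u, u⟫) / (-⟪J u, u⟫) :=
          div_le_div₀ (by linarith) hge (by linarith) hMu
        have hsplit : ⟪J (L u), L u⟫ / ⟪J u, u⟫ =
            1 + (⟪J (L u), L u⟫ - ⟪J u, u⟫) / ⟪J u, u⟫ := split_div _ _ hQuneg.ne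
        have hneg : (⟪J (L u), L u⟫ - ⟪J u, u⟫) / ⟪J u, u⟫ =
            -((⟪J (L u), L u⟫ - ⟪J u, u⟫) / (-⟪J u, u⟫)) := by
          rw [div_neg, neg_neg]
        rw [hsplit, hneg]
        linarith
      linarith
    · -- 1 < sInf Sp
      have hb : 1 + δ / M ≤ sInf Sp := by
        refine le_csInf hSpne ?_
        rintro r ⟨v, hv, rfl⟩
        have hvne : v ≠ 0 := by rintro rfl; rw [hQ0] at hv; exact lt_irrefl _ hv
        obtain ⟨u, he1, he2, hge, habs⟩ := hkey v hvne
        have hvnorm : (0:ℝ) < ‖v‖ := norm_pos_iff.mpr hvne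
        have hQupos : 0 < ⟪J u, u⟫ := by nlinarith [he1, hv, sq_nonneg ‖v‖]
        have hratio : ⟪J (L v), L v⟫ / ⟪J v, v⟫ = ⟪J (L u), L u⟫ / ⟪J u, u⟫ := by
          rw [he1, he2, mul_div_mul_left _ _ (by positivity : (‖v‖:ℝ) ^ 2 ≠ 0)]
        rw [hratio]
        have hMu : ⟪J u, u⟫ ≤ M := le_trans (le_abs_self _) habs
        have hdd : δ / M ≤ (⟪J (L u), L u⟫ - ⟪J u, u⟫) / ⟪J u, u⟫ :=
          div_le_div₀ (by linarith) hge hQupos hMu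
        have hsplit : ⟪J (L u), L u⟫ / ⟪J u, u⟫ =
            1 + (⟪J (L u), L u⟫ - ⟪J u, u⟫) / ⟪J u, u⟫ := split_div _ _ hQupos.ne'
        rw [hsplit]
        linarith
      linarith
  refine ⟨⟨fun hmono => ⟨?_, ?_⟩, fun h v => ?_⟩, fun hstrict => ⟨fun hsm => ⟨?_, ?_⟩,
    fun h v hv => ?_⟩⟩
  · -- monotone → rhoMinus ≤ 1
    rw [hrm]
    refine csSup_le hSmne ?_
    rintro r ⟨v, hv, rfl⟩
    exact div_le_one_of_neg' hv (hmono v)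
  · -- monotone → 1 ≤ rhoPlus
    rw [hrp]
    refine le_csInf hSpne ?_
    rintro r ⟨v, hv, rfl⟩
    exact (one_le_div hv).mpr (hmono v)
  · -- bounds → monotone
    obtain ⟨h1, h2⟩ := h
    rw [hrm] at h1; rw [hrp] at h2
    rcases lt_trichotomy (⟪J v, v⟫) 0 with hv | hv | hv
    · exact hnegcase v h1 hv
    · rw [hv]; exact hzerocase v hv
    · exact hposcase v h2 hv
  · -- strict monotone → rhoMinus < 1
    rw [hrm]
    exact (hstrictbounds hsm).1
  · -- strict monotone → 1 < rhoPlus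
    rw [hrp]
    exact (hstrictbounds hsm).2
  · -- strict bounds → strict monotone
    obtain ⟨h1, h2⟩ := h
    rw [hrm] at h1; rw [hrp] at h2
    rcases lt_trichotomy (⟪J v, v⟫) 0 with hvq | hvq | hvq
    · exact hnegcase' v h1 hvq
    · have hmem : L v ∈ posCone J := hstrict v (Or.inr hvq)
      rcases hmem with hm | hm
      · exact absurd (hLinv.injective (by rw [show L v = 0 from hm, map_zero])) hv
      · rw [hvq]; exact hm
    · exact hposcase' v h2 hvq
end
end
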